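/- Let S = K[x₁,…,xₙ] be graded by an abelian group A with deg(x_i) = a_i, and suppose the grading is positive (dim_K S_a < ∞ for all a ∈ A). Let φ : A → ℤ be a group homomorphism with φ(a) > 0 whenever S_a ≠ 0 and a ≠ 0. Let h : A → ℕ be a function, let D be a very supportive set for h, and choose N > 0 with φ(a) < N for all a ∈ D. Define h̄ : A → ℕ by h̄(a) = h(a) if φ(a) < N, and h̄(a) = 0 otherwise. Let B ≥ N be such that every degree a of a minimal generator, or of a minimal generator of the syzygy module, of the monomial ideal ⟨x^u : φ(deg(x^u)) ≥ N⟩ satisfies φ(a) ≤ B, and set D' = D ∪ { a ∈ A : a = deg(x^u) for some monomial x^u and N ≤ φ(a) ≤ B }. Then D' is a very supportive set for h̄. -/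

import Mathlib

open MvPolynomial

/-- The degree in `A` of the monomial `x^u`, for the grading with `deg(x_i) = wt i`. -/
def mdeg {n : ℕ} {A : Type*} [AddCommGroup A] (wt : Fin n → A) (u : Fin n →₀ ℕ) : A :=
  ∑ i, u i • wt i

/-- A set of exponent vectors corresponding to a monomial ideal, i.e. closed under
multiplication by monomials. -/
def UpSet {n : ℕ} (U : Set (Fin n →₀ ℕ)) : Prop :=
  ∀ u ∈ U, ∀ w : Fin n →₀ ℕ, u + w ∈ U

/-- The Hilbert function of the monomial ideal with monomials `U`: the number of
standard monomials in each degree. -/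
noncomputable def HF {n : ℕ} {A : Type*} [AddCommGroup A] (wt : Fin n → A)
    (U : Set (Fin n →₀ ℕ)) (a : A) : ℕ :=
  Set.ncard {u : Fin n →₀ ℕ | mdeg wt u = a ∧ u ∉ U}

/-- The monomial ideal `U` is generated by monomials whose degrees lie in `D`. -/
def GenInDegs {n : ℕ} {A : Type*} [AddCommGroup A] (wt : Fin n → A)
    (U : Set (Fin n →₀ ℕ)) (D : Set A) : Prop :=
  ∃ G ⊆ U, (∀ g ∈ G, mdeg wt g ∈ D) ∧ ∀ u, u ∈ U ↔ ∃ g ∈ G, g ≤ u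

/-- The minimal monomial generators of the monomial ideal `U`. -/
def minGens {n : ℕ} (U : Set (Fin n →₀ ℕ)) : Set (Fin n →₀ ℕ) :=
  {u ∈ U | ∀ v ∈ U, v ≤ u → v = u}

/-- The map `⊕_{x^u ∈ G} S·e_u → S` sending `e_u` to `x^u`; its kernel is the syzygy
module of the monomial ideal generated by `G`. -/
noncomputable def syzMap (K : Type*) [Field K] {n : ℕ} (G : Set (Fin n →₀ ℕ)) :
    (G →₀ MvPolynomial (Fin n) K) →ₗ[MvPolynomial (Fin n) K] MvPolynomial (Fin n) K :=
  Finsupp.linearCombination _ (fun g => monomial (g : Fin n →₀ ℕ) 1)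

/-- The Koszul syzygies `x^{v'}e_u − x^{u'}e_v` (where
`x^u x^{v'} = x^v x^{u'} = lcm(x^u,x^v)`) among generators in `G` whose lcm has degree
in `D`. -/
noncomputable def koszulSyz (K : Type*) [Field K] {n : ℕ} {A : Type*} [AddCommGroup A]
    (wt : Fin n → A) (G : Set (Fin n →₀ ℕ)) (D : Set A) :
    Set (G →₀ MvPolynomial (Fin n) K) :=
  { s | ∃ u v : G, mdeg wt ((u : Fin n →₀ ℕ) ⊔ (v : Fin n →₀ ℕ)) ∈ D ∧
      s = Finsupp.single u (monomial (((u : Fin n →₀ ℕ) ⊔ (v : Fin n →₀ ℕ)) - (u : Fin n →₀ ℕ)) 1) -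
          Finsupp.single v (monomial (((u : Fin n →₀ ℕ) ⊔ (v : Fin n →₀ ℕ)) - (v : Fin n →₀ ℕ)) 1) }

/-- `D` is a very supportive set for the Hilbert function `h`:
(g) every monomial ideal with Hilbert function `h` is generated in degrees in `D`;
(h) a monomial ideal generated in degrees in `D` whose Hilbert function agrees with `h`
on `D` has Hilbert function `h` everywhere;
(s) for every monomial ideal with Hilbert function `h`, the syzygy module of its
minimal generators is generated by the Koszul syzygies whose lcm-degree lies in `D`. -/
def VerySupportive (K : Type*) [Field K] {n : ℕ} {A : Type*} [AddCommGroup A]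
    (wt : Fin n → A) (h : A → ℕ) (D : Set A) : Prop :=
  D.Finite ∧
  (∀ U : Set (Fin n →₀ ℕ), UpSet U → (∀ a, HF wt U a = h a) → GenInDegs wt U D) ∧
  (∀ U : Set (Fin n →₀ ℕ), UpSet U → GenInDegs wt U D →
    (∀ a ∈ D, HF wt U a = h a) → ∀ a, HF wt U a = h a) ∧
  (∀ U : Set (Fin n →₀ ℕ), UpSet U → (∀ a, HF wt U a = h a) →
    LinearMap.ker (syzMap K (minGens U)) =
      Submodule.span (MvPolynomial (Fin n) K) (koszulSyz K wt (minGens U) D))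

section Basic

variable {n : ℕ} {A : Type*} [AddCommGroup A] (wt : Fin n → A)

lemma mdeg_add (u v : Fin n →₀ ℕ) : mdeg wt (u + v) = mdeg wt u + mdeg wt v := by
  simp [mdeg, add_smul, Finset.sum_add_distrib]

lemma mdeg_zero : mdeg wt (0 : Fin n →₀ ℕ) = 0 := by simp [mdeg]

lemma mdeg_smul (k : ℕ) (u : Fin n →₀ ℕ) : mdeg wt (k • u) = k • mdeg wt u := by
  simp [mdeg, Finset.smul_sum, smul_smul]

lemma mdeg_single (j : Fin n) (m : ℕ) : mdeg wt (Finsupp.single j m) = m • wt j := by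
  rw [mdeg, Finset.sum_eq_single j]
  · simp
  · intro i _ hij; simp [Finsupp.single_apply, Ne.symm hij]
  · simp

lemma mdeg_tsub_add {u v : Fin n →₀ ℕ} (h : u ≤ v) :
    mdeg wt (v - u) + mdeg wt u = mdeg wt v := by
  rw [← mdeg_add]; rw [tsub_add_cancel_of_le h]

variable (hpos : ∀ a : A, {u : Fin n →₀ ℕ | mdeg wt u = a}.Finite)

include hpos in
lemma mdeg_eq_zero {u : Fin n →₀ ℕ} (hu : mdeg wt u = 0) : u = 0 := by
  by_contra h0
  have hinj : Function.Injective (fun k : ℕ => k • u) := by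
    obtain ⟨i, hi⟩ : ∃ i, u i ≠ 0 := by
      by_contra hall; push_neg at hall; exact h0 (Finsupp.ext hall)
    intro a b hab
    have := congrArg (fun w : Fin n →₀ ℕ => w i) hab
    simp only [Finsupp.smul_apply, smul_eq_mul] at this
    exact Nat.eq_of_mul_eq_mul_right (Nat.pos_of_ne_zero hi) this
  have hsub : Set.range (fun k : ℕ => k • u) ⊆ {w : Fin n →₀ ℕ | mdeg wt w = 0} := by
    rintro _ ⟨k, rfl⟩; simp [mdeg_smul, hu]
  exact Set.infinite_range_of_injective hinj ((hpos 0).subset hsub)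

variable (φ : A →+ ℤ)
variable (hφ : ∀ a : A, a ≠ 0 → (∃ u : Fin n →₀ ℕ, mdeg wt u = a) → 0 < φ a)

lemma phi_mdeg (u : Fin n →₀ ℕ) : φ (mdeg wt u) = ∑ i, (u i : ℤ) * φ (wt i) := by
  rw [mdeg, map_sum]
  congr 1; ext i
  rw [map_nsmul]; simp [nsmul_eq_mul]

include hpos hφ in
lemma d_pos {u : Fin n →₀ ℕ} (hu : u ≠ 0) : 0 < φ (mdeg wt u) := by
  exact hφ _ (fun h => hu (mdeg_eq_zero wt hpos h)) ⟨u, rfl⟩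

include hpos hφ in
lemma d_nonneg (u : Fin n →₀ ℕ) : 0 ≤ φ (mdeg wt u) := by
  rcases eq_or_ne u 0 with rfl | h
  · simp [mdeg_zero]
  · exact (d_pos wt hpos φ hφ h).le

include hpos hφ in
lemma d_mono {u v : Fin n →₀ ℕ} (h : u ≤ v) : φ (mdeg wt u) ≤ φ (mdeg wt v) := by
  have h2 := d_nonneg wt hpos φ hφ (v - u)
  have h3 : φ (mdeg wt (v-u)) + φ (mdeg wt u) = φ (mdeg wt v) := by
    rw [← map_add, mdeg_tsub_add wt h]
  omega

include hpos hφ in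
lemma d_strict_mono {u v : Fin n →₀ ℕ} (h : u ≤ v) (hne : u ≠ v) :
    φ (mdeg wt u) < φ (mdeg wt v) := by
  have hsub : v - u ≠ 0 := by
    intro h0
    exact hne (le_antisymm h (by rw [← tsub_add_cancel_of_le h, h0, zero_add]))
  have h2 := d_pos wt hpos φ hφ hsub
  have : φ (mdeg wt (v-u)) + φ (mdeg wt u) = φ (mdeg wt v) := by
    rw [← map_add, mdeg_tsub_add wt h]
  omega

end Basic

section MG

variable {n : ℕ}

lemma upSet_mem {U : Set (Fin n →₀ ℕ)} (hU : UpSet U) {g u : Fin n →₀ ℕ}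
    (hg : g ∈ U) (h : g ≤ u) : u ∈ U := by
  have := hU g hg (u - g)
  rwa [add_tsub_cancel_of_le h] at this

lemma minGens_subset {U : Set (Fin n →₀ ℕ)} : minGens U ⊆ U := fun _ h => h.1

lemma ndeg_lt {u v : Fin n →₀ ℕ} (h : u ≤ v) (hne : u ≠ v) :
    ∑ i, u i < ∑ i, v i := by
  obtain ⟨i, hi⟩ : ∃ i, u i ≠ v i := by
    by_contra hall; push_neg at hall; exact hne (Finsupp.ext hall)
  exact Finset.sum_lt_sum (fun j _ => h j) ⟨i, Finset.mem_univ i, lt_of_le_of_ne (h i) hi⟩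

lemma exists_minGens_le {U : Set (Fin n →₀ ℕ)} {u : Fin n →₀ ℕ} (hu : u ∈ U) :
    ∃ g ∈ minGens U, g ≤ u := by
  obtain ⟨m, hm⟩ : ∃ m, ∑ i, u i = m := ⟨_, rfl⟩
  induction m using Nat.strong_induction_on generalizing u with
  | _ m ih =>
    by_cases hmin : ∀ v ∈ U, v ≤ u → v = u
    · exact ⟨u, ⟨hu, hmin⟩, le_refl u⟩
    · push_neg at hmin
      obtain ⟨v, hv, hvu, hvne⟩ := hmin
      obtain ⟨g, hg, hgv⟩ := ih (∑ i, v i) (hm ▸ ndeg_lt hvu hvne) hv rfl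
      exact ⟨g, hg, le_trans hgv hvu⟩

end MG

section HFsec

variable {n : ℕ} {A : Type*} [AddCommGroup A] (wt : Fin n → A)
variable (hpos : ∀ a : A, {u : Fin n →₀ ℕ | mdeg wt u = a}.Finite)

include hpos in
lemma HF_slice_finite (U : Set (Fin n →₀ ℕ)) (a : A) :
    {u : Fin n →₀ ℕ | mdeg wt u = a ∧ u ∉ U}.Finite :=
  (hpos a).subset (fun _ h => h.1)

include hpos in
lemma HF_eq_zero_iff {U : Set (Fin n →₀ ℕ)} {a : A} :
    HF wt U a = 0 ↔ ∀ u : Fin n →₀ ℕ, mdeg wt u = a → u ∈ U := by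
  rw [HF, Set.ncard_eq_zero (HF_slice_finite wt hpos U a)]
  constructor
  · intro h u hm
    by_contra hc
    exact absurd (Set.eq_empty_iff_forall_notMem.mp h u) (by simp [hm, hc])
  · intro h
    ext u; simp only [Set.mem_setOf_eq, Set.mem_empty_iff_false, iff_false, not_and]
    intro hm; simp [h u hm]

include hpos in
lemma slice_eq_of_HF_le {U1 U2 : Set (Fin n →₀ ℕ)} {a : A}
    (hsub : ∀ u : Fin n →₀ ℕ, mdeg wt u = a → u ∈ U1 → u ∈ U2)
    (hcard : HF wt U1 a ≤ HF wt U2 a) :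
    ∀ u : Fin n →₀ ℕ, mdeg wt u = a → (u ∈ U1 ↔ u ∈ U2) := by
  have hst : {u : Fin n →₀ ℕ | mdeg wt u = a ∧ u ∉ U2} ⊆ {u | mdeg wt u = a ∧ u ∉ U1} := by
    rintro u ⟨hm, hu2⟩; exact ⟨hm, fun hu1 => hu2 (hsub u hm hu1)⟩
  have heq := Set.eq_of_subset_of_ncard_le hst hcard (HF_slice_finite wt hpos U1 a)
  intro u hm
  refine ⟨hsub u hm, fun hu2 => ?_⟩
  by_contra hu1
  have : u ∈ {u : Fin n →₀ ℕ | mdeg wt u = a ∧ u ∉ U2} := heq ▸ ⟨hm, hu1⟩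
  exact this.2 hu2

end HFsec

set_option linter.unusedVariables false

section SyzSec

variable (K : Type*) [Field K] {n : ℕ} {A : Type*} [AddCommGroup A] (wt : Fin n → A)

lemma fsub_lemma {a b c : Fin n →₀ ℕ} (hab : a ≤ b) (hbc : b ≤ c) :
    (c - b) + (b - a) = c - a := by
  ext i
  have h1 := hab i; have h2 := hbc i
  simp only [Finsupp.add_apply, Finsupp.tsub_apply]
  omega

/-- The Koszul syzygy element for a pair of generators. -/
noncomputable def kz (G : Set (Fin n →₀ ℕ)) (u v : G) :
    (G →₀ MvPolynomial (Fin n) K) :=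
  Finsupp.single u (monomial (((u : Fin n →₀ ℕ) ⊔ (v : Fin n →₀ ℕ)) - (u : Fin n →₀ ℕ)) 1) -
    Finsupp.single v (monomial (((u : Fin n →₀ ℕ) ⊔ (v : Fin n →₀ ℕ)) - (v : Fin n →₀ ℕ)) 1)

lemma koszulSyz_eq (G : Set (Fin n →₀ ℕ)) (D : Set A) :
    koszulSyz K wt G D = {s | ∃ u v : G,
      mdeg wt ((u : Fin n →₀ ℕ) ⊔ (v : Fin n →₀ ℕ)) ∈ D ∧ s = kz K G u v} := rfl

lemma syzMap_single (G : Set (Fin n →₀ ℕ)) (g : G) (p : MvPolynomial (Fin n) K) :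
    syzMap K G (Finsupp.single g p) = p * monomial (g : Fin n →₀ ℕ) 1 := by
  simp [syzMap, Finsupp.linearCombination_single, smul_eq_mul]

lemma kz_mem_ker (G : Set (Fin n →₀ ℕ)) (u v : G) :
    kz K G u v ∈ LinearMap.ker (syzMap K G) := by
  rw [LinearMap.mem_ker, kz, map_sub, syzMap_single, syzMap_single]
  rw [monomial_mul, monomial_mul,
    tsub_add_cancel_of_le (le_sup_left : (u : Fin n →₀ ℕ) ≤ _),
    tsub_add_cancel_of_le (le_sup_right : (v : Fin n →₀ ℕ) ≤ _), sub_self]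

variable {G H : Set (Fin n →₀ ℕ)} (sel : G → H)

/-- Transfer map sending `e_g ↦ x^{g - sel g} e_{sel g}`. -/
noncomputable def Tmap (hsel : ∀ g : G, ((sel g : Fin n →₀ ℕ)) ≤ (g : Fin n →₀ ℕ)) :
    (G →₀ MvPolynomial (Fin n) K) →ₗ[MvPolynomial (Fin n) K] (H →₀ MvPolynomial (Fin n) K) :=
  Finsupp.lsum (MvPolynomial (Fin n) K)
    (fun g => LinearMap.id.smulRight
      (Finsupp.single (sel g) (monomial ((g : Fin n →₀ ℕ) - ((sel g : Fin n →₀ ℕ))) 1)))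

variable (hsel : ∀ g : G, ((sel g : Fin n →₀ ℕ)) ≤ (g : Fin n →₀ ℕ))

lemma Tmap_single (g : G) (p : MvPolynomial (Fin n) K) :
    Tmap K sel hsel (Finsupp.single g p) =
      Finsupp.single (sel g) (p * monomial ((g : Fin n →₀ ℕ) - ((sel g : Fin n →₀ ℕ))) 1) := by
  simp [Tmap, Finsupp.smul_single, smul_eq_mul]

lemma syzMap_Tmap (s : G →₀ MvPolynomial (Fin n) K) :
    syzMap K H (Tmap K sel hsel s) = syzMap K G s := by
  induction s using Finsupp.induction_linear with
  | zero => simp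
  | add f g hf hg => simp [map_add, hf, hg]
  | single g p =>
    rw [Tmap_single, syzMap_single, syzMap_single, mul_assoc, monomial_mul, one_mul,
      tsub_add_cancel_of_le (hsel g)]

lemma Tmap_kz (u v : G) :
    Tmap K sel hsel (kz K G u v) =
      (monomial (((u : Fin n →₀ ℕ) ⊔ (v : Fin n →₀ ℕ)) -
        (((sel u : Fin n →₀ ℕ)) ⊔ ((sel v : Fin n →₀ ℕ)))) (1 : K)) • kz K H (sel u) (sel v) := by
  have hu : ((sel u : Fin n →₀ ℕ)) ⊔ ((sel v : Fin n →₀ ℕ)) ≤ (u : Fin n →₀ ℕ) ⊔ (v : Fin n →₀ ℕ) :=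
    sup_le_sup (hsel u) (hsel v)
  rw [kz, map_sub, Tmap_single, Tmap_single, kz, smul_sub, Finsupp.smul_single,
    Finsupp.smul_single, smul_eq_mul, smul_eq_mul, monomial_mul, monomial_mul,
    monomial_mul, monomial_mul,
    fsub_lemma (hsel u) (le_sup_left : (u : Fin n →₀ ℕ) ≤ _),
    fsub_lemma (hsel v) (le_sup_right : (v : Fin n →₀ ℕ) ≤ _),
    fsub_lemma (le_sup_left : ((sel u : Fin n →₀ ℕ)) ≤ _) hu,
    fsub_lemma (le_sup_right : ((sel v : Fin n →₀ ℕ)) ≤ _) hu]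


lemma Tmap_span (D0 : Set A) (W : Submodule (MvPolynomial (Fin n) K) (H →₀ MvPolynomial (Fin n) K))
    (hW : ∀ u v : G, mdeg wt ((u : Fin n →₀ ℕ) ⊔ (v : Fin n →₀ ℕ)) ∈ D0 →
      (monomial (((u : Fin n →₀ ℕ) ⊔ (v : Fin n →₀ ℕ)) -
        (((sel u : Fin n →₀ ℕ)) ⊔ ((sel v : Fin n →₀ ℕ)))) (1 : K)) • kz K H (sel u) (sel v) ∈ W)
    {s : G →₀ MvPolynomial (Fin n) K}
    (hs : s ∈ Submodule.span (MvPolynomial (Fin n) K) (koszulSyz K wt G D0)) :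
    Tmap K sel hsel s ∈ W := by
  induction hs using Submodule.span_induction with
  | mem x hx =>
    obtain ⟨u, v, hd, rfl⟩ := hx
    rw [show (Finsupp.single u (monomial (((u : Fin n →₀ ℕ) ⊔ (v : Fin n →₀ ℕ)) - (u : Fin n →₀ ℕ)) (1:K)) -
          Finsupp.single v (monomial (((u : Fin n →₀ ℕ) ⊔ (v : Fin n →₀ ℕ)) - (v : Fin n →₀ ℕ)) 1)) = kz K G u v from rfl,
      Tmap_kz]
    exact hW u v hd
  | zero => simp
  | add x y _ _ hx hy => rw [map_add]; exact W.add_mem hx hy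
  | smul a x _ hx => rw [map_smul]; exact W.smul_mem a hx

lemma lapply_span_koszul (D0 : Set A) (g0 : G)
    {s : G →₀ MvPolynomial (Fin n) K}
    (hs : s ∈ Submodule.span (MvPolynomial (Fin n) K) (koszulSyz K wt G D0)) :
    s g0 ∈ Ideal.span {p : MvPolynomial (Fin n) K | ∃ r : G,
      mdeg wt ((g0 : Fin n →₀ ℕ) ⊔ (r : Fin n →₀ ℕ)) ∈ D0 ∧ r ≠ g0 ∧
      p = monomial (((g0 : Fin n →₀ ℕ) ⊔ (r : Fin n →₀ ℕ)) - (g0 : Fin n →₀ ℕ)) (1 : K)} := by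
  induction hs using Submodule.span_induction with
  | mem x hx =>
    obtain ⟨u, v, hd, rfl⟩ := hx
    rw [Finsupp.sub_apply, Finsupp.single_apply, Finsupp.single_apply]
    by_cases hu : u = g0 <;> by_cases hv : v = g0
    · subst hu; subst hv; simp
    · subst hu
      rw [if_pos rfl, if_neg hv, sub_zero]
      exact Ideal.subset_span ⟨v, hd, hv, rfl⟩
    · subst hv
      rw [if_neg hu, if_pos rfl, zero_sub]
      refine neg_mem (Ideal.subset_span ⟨u, ?_, hu, ?_⟩)
      · rwa [sup_comm]
      · rw [sup_comm]
    · rw [if_neg hu, if_neg hv, sub_zero]; exact zero_mem _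
  | zero => simp
  | add x y _ _ hx hy => rw [Finsupp.add_apply]; exact add_mem hx hy
  | smul a x _ hx =>
    rw [Finsupp.smul_apply, smul_eq_mul]
    exact Ideal.mul_mem_left _ a hx


/-- `M`-homogeneous component of an element of the free module. -/
noncomputable def comp (G : Set (Fin n →₀ ℕ)) (M : Fin n →₀ ℕ)
    (s : G →₀ MvPolynomial (Fin n) K) : (G →₀ MvPolynomial (Fin n) K) :=
  s.support.sum (fun g => Finsupp.single g
    (if (g : Fin n →₀ ℕ) ≤ M then monomial (M - (g : Fin n →₀ ℕ))
      (coeff (M - (g : Fin n →₀ ℕ)) (s g)) else 0))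

lemma comp_apply (G : Set (Fin n →₀ ℕ)) (M : Fin n →₀ ℕ)
    (s : G →₀ MvPolynomial (Fin n) K) (g0 : G) :
    comp K G M s g0 = if g0 ∈ s.support then
      (if (g0 : Fin n →₀ ℕ) ≤ M then monomial (M - (g0 : Fin n →₀ ℕ))
        (coeff (M - (g0 : Fin n →₀ ℕ)) (s g0)) else 0) else 0 := by
  rw [comp, Finsupp.finset_sum_apply]
  rw [Finset.sum_congr rfl (fun g _ => Finsupp.single_apply)]
  exact Finset.sum_ite_eq' s.support g0 _

lemma sum_comp_eq (G : Set (Fin n →₀ ℕ)) (s : G →₀ MvPolynomial (Fin n) K) :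
    ∑ M ∈ s.support.biUnion (fun g => (s g).support.image (fun m => m + (g : Fin n →₀ ℕ))),
      comp K G M s = s := by
  classical
  refine Finsupp.ext (fun g0 => ?_)
  rw [Finsupp.finset_sum_apply]
  by_cases hg0 : g0 ∈ s.support
  · rw [Finset.sum_congr rfl (fun M _ => comp_apply K G M s g0)]
    simp only [if_pos hg0]
    set p := s g0 with hp
    have hsub : p.support.image (fun m => m + (g0 : Fin n →₀ ℕ)) ⊆
        s.support.biUnion (fun g => (s g).support.image (fun m => m + (g : Fin n →₀ ℕ))) := by
      intro M hM
      exact Finset.mem_biUnion.mpr ⟨g0, hg0, hM⟩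
    rw [← Finset.sum_subset hsub]
    · rw [Finset.sum_image (fun a _ b _ h => by
        exact add_right_cancel h)]
      conv_rhs => rw [p.as_sum]
      refine Finset.sum_congr rfl (fun m hm => ?_)
      rw [if_pos (le_add_self : (g0 : Fin n →₀ ℕ) ≤ m + g0), add_tsub_cancel_right]
    · intro M _ hM
      by_cases hle : (g0 : Fin n →₀ ℕ) ≤ M
      · rw [if_pos hle]
        have : coeff (M - (g0 : Fin n →₀ ℕ)) p = 0 := by
          by_contra hc
          exact hM (Finset.mem_image.mpr ⟨M - (g0 : Fin n →₀ ℕ),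
            MvPolynomial.mem_support_iff.mpr hc, tsub_add_cancel_of_le hle⟩)
        rw [this, monomial_zero]
      · rw [if_neg hle]
  · rw [Finset.sum_congr rfl (fun M _ => comp_apply K G M s g0)]
    simp only [if_neg hg0, Finset.sum_const_zero]
    exact (Finsupp.notMem_support_iff.mp hg0).symm

lemma balance_of_ker (G : Set (Fin n →₀ ℕ)) (s : G →₀ MvPolynomial (Fin n) K)
    (hs : syzMap K G s = 0) (M : Fin n →₀ ℕ) :
    ∑ g ∈ s.support, (if (g : Fin n →₀ ℕ) ≤ M then coeff (M - (g : Fin n →₀ ℕ)) (s g) else 0)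
      = 0 := by
  have h1 : syzMap K G s = ∑ g ∈ s.support, (s g) * monomial (g : Fin n →₀ ℕ) 1 := by
    rw [syzMap, Finsupp.linearCombination_apply, Finsupp.sum]
    exact Finset.sum_congr rfl (fun g _ => rfl)
  have h2 := congrArg (coeff M) (h1.symm.trans hs)
  rw [MvPolynomial.coeff_sum, coeff_zero] at h2
  calc ∑ g ∈ s.support, (if (g : Fin n →₀ ℕ) ≤ M then coeff (M - (g : Fin n →₀ ℕ)) (s g) else 0)
      = ∑ g ∈ s.support, coeff M (s g * monomial (g : Fin n →₀ ℕ) 1) := by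
        refine Finset.sum_congr rfl (fun g _ => ?_)
        rw [coeff_mul_monomial' M (g : Fin n →₀ ℕ) 1 (s g)]
        by_cases hle : (g : Fin n →₀ ℕ) ≤ M
        · simp only [hle, if_true, mul_one]
        · simp only [hle, if_false]
    _ = 0 := h2

lemma comp_mem_of_rel (G : Set (Fin n →₀ ℕ))
    (W : Submodule (MvPolynomial (Fin n) K) (G →₀ MvPolynomial (Fin n) K))
    (M : Fin n →₀ ℕ)
    (hREL : ∀ g g' : G, (g : Fin n →₀ ℕ) ≤ M → (g' : Fin n →₀ ℕ) ≤ M →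
      Finsupp.single g (monomial (M - (g : Fin n →₀ ℕ)) (1:K)) -
        Finsupp.single g' (monomial (M - (g' : Fin n →₀ ℕ)) 1) ∈ W)
    (s : G →₀ MvPolynomial (Fin n) K) (hs : syzMap K G s = 0) :
    comp K G M s ∈ W := by
  classical
  by_cases hex : ∃ g0 ∈ s.support, (g0 : Fin n →₀ ℕ) ≤ M
  · obtain ⟨g0, hg0s, hg0M⟩ := hex
    set cg : G → K := fun g => if (g : Fin n →₀ ℕ) ≤ M then coeff (M - (g : Fin n →₀ ℕ)) (s g) else 0 with hcg
    set elt : G → (G →₀ MvPolynomial (Fin n) K) :=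
      fun g => Finsupp.single g (monomial (M - (g : Fin n →₀ ℕ)) (1:K)) with helt
    have h1 : comp K G M s = ∑ g ∈ s.support, (C (cg g) : MvPolynomial (Fin n) K) • elt g := by
      rw [comp]
      refine Finset.sum_congr rfl (fun g _ => ?_)
      by_cases hle : (g : Fin n →₀ ℕ) ≤ M
      · simp only [hcg, helt, hle, if_true, Finsupp.smul_single, smul_eq_mul,
          C_mul_monomial, mul_one]
      · simp only [hcg, helt, hle, if_false, map_zero, zero_smul, Finsupp.single_zero]
    have h2 : ∑ g ∈ s.support, (C (cg g) : MvPolynomial (Fin n) K) • elt g0 = 0 := by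
      rw [← Finset.sum_smul, ← map_sum, balance_of_ker K G s hs M, map_zero, zero_smul]
    rw [h1, ← sub_zero (∑ g ∈ s.support, (C (cg g) : MvPolynomial (Fin n) K) • elt g), ← h2, ← Finset.sum_sub_distrib]
    refine Submodule.sum_mem W (fun g _ => ?_)
    rw [← smul_sub]
    by_cases hle : (g : Fin n →₀ ℕ) ≤ M
    · exact W.smul_mem _ (hREL g g0 hle hg0M)
    · rw [hcg]; simp only [if_neg hle, map_zero, zero_smul]; exact W.zero_mem
  · push_neg at hex
    have : comp K G M s = 0 := by
      rw [comp]
      refine Finset.sum_eq_zero (fun g hg => ?_)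
      rw [if_neg (hex g hg), Finsupp.single_zero]
    rw [this]; exact W.zero_mem

lemma ker_le_of_rel (G : Set (Fin n →₀ ℕ))
    (W : Submodule (MvPolynomial (Fin n) K) (G →₀ MvPolynomial (Fin n) K))
    (hREL : ∀ (M : Fin n →₀ ℕ) (g g' : G), (g : Fin n →₀ ℕ) ≤ M → (g' : Fin n →₀ ℕ) ≤ M →
      Finsupp.single g (monomial (M - (g : Fin n →₀ ℕ)) (1:K)) -
        Finsupp.single g' (monomial (M - (g' : Fin n →₀ ℕ)) 1) ∈ W)
    {s : G →₀ MvPolynomial (Fin n) K} (hs : s ∈ LinearMap.ker (syzMap K G)) : s ∈ W := by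
  rw [LinearMap.mem_ker] at hs
  rw [← sum_comp_eq K G s]
  exact Submodule.sum_mem W (fun M _ => comp_mem_of_rel K G W M (hREL M) s hs)

end SyzSec

section LowV
variable {K : Type*} [Field K] {n : ℕ} {A : Type*} [AddCommGroup A] (wt : Fin n → A)
variable (φ : A →+ ℤ) (N : ℤ)

/-- The part of the monomial ideal `U` generated by elements of `φ∘mdeg`-degree `< N`. -/
def lowV (U : Set (Fin n →₀ ℕ)) : Set (Fin n →₀ ℕ) :=
  {u | ∃ g, (g ∈ U ∧ φ (mdeg wt g) < N) ∧ g ≤ u}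

variable {U : Set (Fin n →₀ ℕ)}

lemma lowV_upset : UpSet (lowV wt φ N U) := by
  rintro u ⟨g, hg, hgu⟩ w
  exact ⟨g, hg, hgu.trans (le_add_right le_rfl)⟩

lemma lowV_subset (hU : UpSet U) : lowV wt φ N U ⊆ U := by
  rintro u ⟨g, ⟨hgU, _⟩, hgu⟩
  exact upSet_mem hU hgU hgu

lemma mem_lowV {u : Fin n →₀ ℕ} (hu : u ∈ U) (hlow : φ (mdeg wt u) < N) :
    u ∈ lowV wt φ N U :=
  ⟨u, ⟨hu, hlow⟩, le_rfl⟩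

lemma HF_congr_slice {U1 U2 : Set (Fin n →₀ ℕ)} {a : A}
    (hiff : ∀ u : Fin n →₀ ℕ, mdeg wt u = a → (u ∈ U1 ↔ u ∈ U2)) :
    HF wt U1 a = HF wt U2 a := by
  unfold HF
  congr 1
  ext u
  simp only [Set.mem_setOf_eq]
  exact and_congr_right (fun hm => not_congr (hiff u hm))

end LowV

section LowVHF
variable (K : Type*) [Field K] {n : ℕ} {A : Type*} [AddCommGroup A] (wt : Fin n → A)
variable (φ : A →+ ℤ) (h : A → ℕ) (D : Set A) (N : ℤ)

lemma lowV_slice (hU : UpSet U) :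
    ∀ a : A, φ a < N → ∀ u : Fin n →₀ ℕ, mdeg wt u = a → (u ∈ U ↔ u ∈ lowV wt φ N U) :=
  fun a ha u hm =>
    ⟨fun hu => mem_lowV wt φ N hu (by rw [hm]; exact ha),
     fun hv => lowV_subset wt φ N hU hv⟩

lemma lowV_HF (hpos : ∀ a : A, {u : Fin n →₀ ℕ | mdeg wt u = a}.Finite)
    (hD : VerySupportive K wt h D) (hDN : ∀ a ∈ D, φ a < N)
    {U : Set (Fin n →₀ ℕ)} (hU : UpSet U)
    (hUlow : ∀ a : A, φ a < N → HF wt U a = h a) :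
    (∀ a, HF wt (lowV wt φ N U) a = h a) ∧ GenInDegs wt (lowV wt φ N U) D := by
  set V := lowV wt φ N U with hVdef
  have hVlow : ∀ a : A, φ a < N → HF wt V a = h a := by
    intro a ha
    rw [← hUlow a ha]
    exact (HF_congr_slice wt (lowV_slice wt φ N hU a ha)).symm
  set V' : Set (Fin n →₀ ℕ) := {u | ∃ g, (g ∈ V ∧ mdeg wt g ∈ D) ∧ g ≤ u} with hV'def
  have hV'up : UpSet V' := by
    rintro u ⟨g, hg, hgu⟩ w
    exact ⟨g, hg, hgu.trans (le_add_right le_rfl)⟩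
  have hV'sub : V' ⊆ V := by
    rintro u ⟨g, ⟨hgV, _⟩, hgu⟩
    exact upSet_mem (lowV_upset wt φ N) hgV hgu
  have hV'gen : GenInDegs wt V' D := by
    refine ⟨{g | g ∈ V ∧ mdeg wt g ∈ D}, ?_, fun g hg => hg.2, fun u => ?_⟩
    · intro g hg
      exact ⟨g, hg, le_rfl⟩
    · exact ⟨fun ⟨g, hg, hgu⟩ => ⟨g, hg, hgu⟩, fun ⟨g, hg, hgu⟩ => ⟨g, hg, hgu⟩⟩
  have hagree : ∀ a ∈ D, HF wt V' a = h a := by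
    intro a ha
    have hsl : ∀ u : Fin n →₀ ℕ, mdeg wt u = a → (u ∈ V' ↔ u ∈ V) := by
      intro u hm
      exact ⟨fun h' => hV'sub h', fun hv => ⟨u, ⟨hv, hm ▸ ha⟩, le_rfl⟩⟩
    rw [HF_congr_slice wt hsl]
    exact hVlow a (hDN a ha)
  have hHFV' : ∀ a, HF wt V' a = h a := hD.2.2.1 V' hV'up hV'gen hagree
  have hVeq : V = V' := by
    refine Set.Subset.antisymm ?_ hV'sub
    rintro u ⟨g, ⟨hgU, hglow⟩, hgu⟩
    have hgV : g ∈ V := mem_lowV wt φ N hgU hglow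
    have hiff := slice_eq_of_HF_le wt hpos (U1 := V') (U2 := V) (a := mdeg wt g)
        (fun v _ hv => hV'sub hv) (by rw [hHFV' _, hVlow _ hglow]) g rfl
    exact upSet_mem hV'up (hiff.2 hgV) hgu
  rw [hVeq] at hVlow ⊢
  exact ⟨hHFV', hV'gen⟩

lemma minGens_lowV (hpos : ∀ a : A, {u : Fin n →₀ ℕ | mdeg wt u = a}.Finite)
    (hφ : ∀ a : A, a ≠ 0 → (∃ u : Fin n →₀ ℕ, mdeg wt u = a) → 0 < φ a)
    (hU : UpSet U) :
    minGens (lowV wt φ N U) = {g ∈ minGens U | φ (mdeg wt g) < N} := by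
  ext g
  constructor
  · rintro ⟨hgV, hmin⟩
    obtain ⟨g', hg', hg'le⟩ := hgV
    have hg'V : g' ∈ lowV wt φ N U := mem_lowV wt φ N hg'.1 hg'.2
    have heq : g' = g := hmin g' hg'V hg'le
    subst heq
    refine ⟨⟨hg'.1, fun v hv hvle => ?_⟩, hg'.2⟩
    have hvlow : φ (mdeg wt v) < N :=
      lt_of_le_of_lt (d_mono wt hpos φ hφ hvle) hg'.2
    exact hmin v (mem_lowV wt φ N hv hvlow) hvle
  · rintro ⟨⟨hgU, hgmin⟩, hglow⟩
    refine ⟨mem_lowV wt φ N hgU hglow, fun v hv hvle => ?_⟩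
    exact hgmin v (lowV_subset wt φ N hU hv) hvle

end LowVHF

section Bbound
variable (K : Type*) [Field K] {n : ℕ} {A : Type*} [AddCommGroup A] (wt : Fin n → A)
variable (φ : A →+ ℤ)

lemma phi_mdeg_single (j : Fin n) (m : ℕ) :
    φ (mdeg wt (Finsupp.single j m)) = (m : ℤ) * φ (wt j) := by
  rw [mdeg_single, map_nsmul, nsmul_eq_mul]

variable (hpos : ∀ a : A, {u : Fin n →₀ ℕ | mdeg wt u = a}.Finite)
variable (hφ : ∀ a : A, a ≠ 0 → (∃ u : Fin n →₀ ℕ, mdeg wt u = a) → 0 < φ a)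
variable (N : ℤ)

include hpos hφ in
lemma wt_ge_one (j : Fin n) : 1 ≤ φ (wt j) := by
  have h1 := d_pos wt hpos φ hφ (u := Finsupp.single j 1)
    (fun hh => one_ne_zero (Finsupp.single_eq_zero.mp hh))
  rwa [phi_mdeg_single, Nat.cast_one, one_mul] at h1

include hpos hφ in
lemma pure_power_minGen (hN : 0 < N)
    (UN : Set (Fin n →₀ ℕ)) (hUNmem : ∀ u : Fin n →₀ ℕ, u ∈ UN ↔ N ≤ φ (mdeg wt u))
    (j : Fin n) :
    ∃ m : ℕ, 1 ≤ m ∧ Finsupp.single j m ∈ minGens UN := by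
  have hdj := wt_ge_one wt φ hpos hφ j
  have hex : ∃ m : ℕ, 1 ≤ m ∧ N ≤ (m : ℤ) * φ (wt j) := by
    refine ⟨N.toNat, by omega, ?_⟩
    have h1 : (N.toNat : ℤ) = N := Int.toNat_of_nonneg hN.le
    nlinarith
  classical
  obtain ⟨hm1, hmN⟩ := Nat.find_spec hex
  refine ⟨Nat.find hex, hm1, ?_, ?_⟩
  · rw [hUNmem, phi_mdeg_single]; exact hmN
  · intro v hv hvle
    have hvs : v = Finsupp.single j (v j) := by
      ext i
      by_cases hi : i = j
      · subst hi; simp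
      · have h2 := hvle i
        rw [Finsupp.single_apply, if_neg (fun hh => hi hh.symm)] at h2 ⊢
        omega
    have hvj1 : 1 ≤ v j := by
      by_contra hc
      have hv0 : v = 0 := by
        rw [hvs]
        have : v j = 0 := by omega
        rw [this, Finsupp.single_zero]
      rw [hUNmem, hv0, mdeg_zero, map_zero] at hv
      omega
    have hvN : N ≤ ((v j : ℕ) : ℤ) * φ (wt j) := by
      rw [hUNmem, hvs, phi_mdeg_single] at hv
      exact hv
    have hfind := Nat.find_min' hex ⟨hvj1, hvN⟩
    have hle := hvle j
    rw [Finsupp.single_apply, if_pos rfl] at hle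
    rw [hvs]
    congr 1
    omega

include hpos hφ in
lemma B_bound (hN : 0 < N) (B : ℤ)
    (UN : Set (Fin n →₀ ℕ)) (hUNmem : ∀ u : Fin n →₀ ℕ, u ∈ UN ↔ N ≤ φ (mdeg wt u))
    (hB2 : LinearMap.ker (syzMap K (minGens UN)) =
      Submodule.span (MvPolynomial (Fin n) K)
        (koszulSyz K wt (minGens UN) {a : A | φ a ≤ B}))
    (j i : Fin n) (hij : i ≠ j) :
    N + φ (wt j) ≤ B := by
  by_contra hcon
  push_neg at hcon
  have hdj := wt_ge_one wt φ hpos hφ j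
  obtain ⟨mj, hmj1, hpj⟩ := pure_power_minGen wt φ hpos hφ N hN UN hUNmem j
  obtain ⟨mi, hmi1, hpi⟩ := pure_power_minGen wt φ hpos hφ N hN UN hUNmem i
  set pj : Fin n →₀ ℕ := Finsupp.single j mj with hpjdef
  set pi : Fin n →₀ ℕ := Finsupp.single i mi with hpidef
  set pj' : ↑(minGens UN) := ⟨pj, hpj⟩ with hpj'def
  set pi' : ↑(minGens UN) := ⟨pi, hpi⟩ with hpi'def
  have hne : pi' ≠ pj' := by
    intro hh
    have h2 : pi j = pj j := DFunLike.congr_fun (Subtype.ext_iff.mp hh) j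
    rw [hpjdef, hpidef, Finsupp.single_apply, Finsupp.single_apply,
      if_neg hij, if_pos rfl] at h2
    omega
  have hker := kz_mem_ker K (minGens UN) pj' pi'
  rw [hB2] at hker
  have hext := lapply_span_koszul K wt {a : A | φ a ≤ B} pj' hker
  have happ : (kz K (minGens UN) pj' pi') pj' =
      monomial ((pj ⊔ pi) - pj) (1:K) := by
    rw [kz, Finsupp.sub_apply, Finsupp.single_apply, Finsupp.single_apply,
      if_pos rfl, if_neg hne, sub_zero]
  rw [happ] at hext
  have hempty : {p : MvPolynomial (Fin n) K | ∃ r : ↑(minGens UN),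
      mdeg wt ((pj' : Fin n →₀ ℕ) ⊔ (r : Fin n →₀ ℕ)) ∈ {a : A | φ a ≤ B} ∧ r ≠ pj' ∧
      p = monomial (((pj' : Fin n →₀ ℕ) ⊔ (r : Fin n →₀ ℕ)) - (pj' : Fin n →₀ ℕ)) (1 : K)}
      = ∅ := by
    refine Set.eq_empty_iff_forall_notMem.mpr (fun p hp => ?_)
    obtain ⟨r, hrB, hrne, rfl⟩ := hp
    set q : Fin n →₀ ℕ := ↑r with hqdef
    have hqUN : q ∈ UN := minGens_subset r.2
    have hqj : q j < mj := by
      by_contra hc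
      push_neg at hc
      have hple : pj ≤ q := by
        rw [hpjdef]
        intro i'
        rw [Finsupp.single_apply]
        by_cases hi' : j = i'
        · subst hi'; simpa using hc
        · simp [hi']
      have hqmin := r.2.2 pj ((hUNmem pj).mpr (by
        rw [hpjdef, phi_mdeg_single]
        have := ((hUNmem pj).mp (minGens_subset hpj))
        rwa [hpjdef, phi_mdeg_single] at this)) hple
      exact hrne (Subtype.ext hqmin.symm)
    have hsup : (pj' : Fin n →₀ ℕ) ⊔ q = q + Finsupp.single j (mj - q j) := by
      have hco : (pj' : Fin n →₀ ℕ) = Finsupp.single j mj := rfl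
      rw [hco]
      ext i'
      rw [Finsupp.sup_apply, Finsupp.add_apply]
      rcases eq_or_ne j i' with hi' | hi'
      · subst hi'
        rw [Finsupp.single_apply, if_pos rfl, Finsupp.single_apply, if_pos rfl]
        omega
      · rw [Finsupp.single_apply, if_neg hi', Finsupp.single_apply, if_neg hi']
        omega
    have hval : φ (mdeg wt ((pj' : Fin n →₀ ℕ) ⊔ q)) =
        φ (mdeg wt q) + ((mj - q j : ℕ) : ℤ) * φ (wt j) := by
      rw [hsup, mdeg_add, map_add, phi_mdeg_single]
    have hqN : N ≤ φ (mdeg wt q) := (hUNmem q).mp hqUN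
    have hcast : (1 : ℤ) ≤ ((mj - q j : ℕ) : ℤ) := by
      have : 1 ≤ mj - q j := by omega
      exact_mod_cast this
    have : N + φ (wt j) ≤ φ (mdeg wt ((pj' : Fin n →₀ ℕ) ⊔ q)) := by
      rw [hval]
      nlinarith
    have hrB' : φ (mdeg wt ((pj' : Fin n →₀ ℕ) ⊔ q)) ≤ B := hrB
    omega
  rw [hempty, Ideal.span_empty] at hext
  have h0 := (Submodule.mem_bot _).mp hext
  rw [MvPolynomial.monomial_eq_zero] at h0
  exact one_ne_zero h0

end Bbound

/-- (Lemma 2.2.)  Suppose the `A`-grading of `S = K[x₁,…,xₙ]` is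
positive and `φ : A → ℤ` is positive on all nonzero degrees of monomials.  Let `D` be a
very supportive set for `h`, let `N` exceed `φ` on `D`, and truncate `h` to `h̄` by
setting it to `0` in degrees with `φ(a) ≥ N`.  If `B ≥ N` bounds the `φ`-degrees of the
minimal generators and the minimal (Koszul) syzygies of the monomial ideal
`⟨x^u : φ(deg x^u) ≥ N⟩`, then
`D' = D ∪ {a realizable : N ≤ φ(a) ≤ B}` is very supportive for `h̄`. -/
theorem verySupportive_truncation (K : Type*) [Field K] {n : ℕ} {A : Type*}
    [AddCommGroup A] (wt : Fin n → A)
    (hpos : ∀ a : A, {u : Fin n →₀ ℕ | mdeg wt u = a}.Finite)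
    (φ : A →+ ℤ)
    (hφ : ∀ a : A, a ≠ 0 → (∃ u : Fin n →₀ ℕ, mdeg wt u = a) → 0 < φ a)
    (h : A → ℕ) (D : Set A) (hD : VerySupportive K wt h D)
    (N : ℤ) (hN : 0 < N) (hDN : ∀ a ∈ D, φ a < N)
    (hbar : A → ℕ) (hhbar : ∀ a, hbar a = if φ a < N then h a else 0)
    (UN : Set (Fin n →₀ ℕ))
    (hUN : UN = {u : Fin n →₀ ℕ | ∃ g : Fin n →₀ ℕ, g ≤ u ∧ N ≤ φ (mdeg wt g)})
    (B : ℤ) (hNB : N ≤ B)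
    (hB1 : ∀ u ∈ minGens UN, φ (mdeg wt u) ≤ B)
    (hB2 : LinearMap.ker (syzMap K (minGens UN)) =
      Submodule.span (MvPolynomial (Fin n) K)
        (koszulSyz K wt (minGens UN) {a : A | φ a ≤ B}))
    (D' : Set A)
    (hD' : D' = D ∪ {a : A | (∃ u : Fin n →₀ ℕ, mdeg wt u = a) ∧ N ≤ φ a ∧ φ a ≤ B}) :
    VerySupportive K wt hbar D' := by
  obtain ⟨hDfin, hDg, hDh, hDs⟩ := hD
  have hUNmem : ∀ u : Fin n →₀ ℕ, u ∈ UN ↔ N ≤ φ (mdeg wt u) := by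
    intro u
    rw [hUN]
    constructor
    · rintro ⟨g, hgle, hgN⟩
      exact le_trans hgN (d_mono wt hpos φ hφ hgle)
    · intro hN'
      exact ⟨u, le_rfl, hN'⟩
  have hXD' : ∀ u : Fin n →₀ ℕ, N ≤ φ (mdeg wt u) → φ (mdeg wt u) ≤ B →
      mdeg wt u ∈ D' := by
    intro u h1 h2
    rw [hD']
    exact Or.inr ⟨⟨u, rfl⟩, h1, h2⟩
  have hDD' : D ⊆ D' := by rw [hD']; exact Set.subset_union_left
  have hD'fin : D'.Finite := by
    rw [hD']
    refine hDfin.union ?_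
    have himg : {a : A | (∃ u : Fin n →₀ ℕ, mdeg wt u = a) ∧ N ≤ φ a ∧ φ a ≤ B} ⊆
        (mdeg wt) '' (Set.Iic (Finsupp.equivFunOnFinite.symm (fun _ : Fin n => B.toNat))) := by
      rintro a ⟨⟨u, rfl⟩, h1, h2⟩
      refine ⟨u, ?_, rfl⟩
      have hsum : (∑ i, (u i : ℤ)) ≤ φ (mdeg wt u) := by
        rw [phi_mdeg wt φ u]
        refine Finset.sum_le_sum (fun i _ => ?_)
        have hw := wt_ge_one wt φ hpos hφ i
        nlinarith [Int.ofNat_nonneg (u i)]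
      intro i2
      have hle : (u i2 : ℤ) ≤ ∑ i, (u i : ℤ) :=
        Finset.single_le_sum (f := fun i => (u i : ℤ))
          (fun i _ => Int.ofNat_nonneg (u i)) (Finset.mem_univ i2)
      have : (u i2 : ℤ) ≤ B := le_trans hle (le_trans hsum h2)
      have h3 : u i2 ≤ B.toNat := by omega
      simpa using h3
    exact ((Set.finite_Iic _).image _).subset himg
  refine ⟨hD'fin, ?_, ?_, ?_⟩
  · -- condition (g)
    intro U hU hHF
    have hUlow : ∀ a : A, φ a < N → HF wt U a = h a := by
      intro a ha
      rw [hHF a, hhbar a, if_pos ha]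
    have hUNsubU : ∀ u : Fin n →₀ ℕ, u ∈ UN → u ∈ U := by
      intro u hu
      have h0 : HF wt U (mdeg wt u) = 0 := by
        rw [hHF, hhbar, if_neg (not_lt.mpr ((hUNmem u).mp hu))]
      exact (HF_eq_zero_iff wt hpos).mp h0 u rfl
    obtain ⟨hVHF, hVgen⟩ :=
      lowV_HF K wt φ h D N hpos ⟨hDfin, hDg, hDh, hDs⟩ hDN hU hUlow
    refine ⟨minGens U, minGens_subset, ?_, fun u =>
      ⟨fun hu => exists_minGens_le hu,
       fun ⟨g, hg, hle⟩ => upSet_mem hU (minGens_subset hg) hle⟩⟩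
    intro g hg
    by_cases hlow : φ (mdeg wt g) < N
    · have hgV : g ∈ minGens (lowV wt φ N U) := by
        rw [minGens_lowV wt φ N hpos hφ hU]
        exact ⟨hg, hlow⟩
      obtain ⟨GV, hGVsub, hGVdeg, hGViff⟩ := hVgen
      obtain ⟨g', hg', hg'le⟩ := (hGViff g).mp hgV.1
      have hge : g' = g := hgV.2 g' (hGVsub hg') hg'le
      exact hDD' (hGVdeg g (hge ▸ hg'))
    · push_neg at hlow
      have hgUN : g ∈ minGens UN :=
        ⟨(hUNmem g).mpr hlow, fun v hv hvle => hg.2 v (hUNsubU v hv) hvle⟩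
      exact hXD' g hlow (hB1 g hgUN)
  · -- condition (h)
    intro U hU hUgen hUagree
    obtain ⟨G, hGsub, hGdeg, hGiff⟩ := hUgen
    have hUNsubU : ∀ u : Fin n →₀ ℕ, u ∈ UN → u ∈ U := by
      intro u hu
      obtain ⟨p, hp, hple⟩ := exists_minGens_le hu
      have hpUN : N ≤ φ (mdeg wt p) := (hUNmem p).mp (minGens_subset hp)
      have hpD' : mdeg wt p ∈ D' := hXD' p hpUN (hB1 p hp)
      have h0 : HF wt U (mdeg wt p) = 0 := by
        rw [hUagree _ hpD', hhbar, if_neg (not_lt.mpr hpUN)]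
      exact upSet_mem hU ((HF_eq_zero_iff wt hpos).mp h0 p rfl) hple
    intro a
    rw [hhbar]
    by_cases ha : φ a < N
    · rw [if_pos ha]
      set V₁ : Set (Fin n →₀ ℕ) := {u | ∃ g, (g ∈ G ∧ mdeg wt g ∈ D) ∧ g ≤ u} with hV₁def
      have hV₁up : UpSet V₁ := by
        rintro u ⟨g, hg, hgu⟩ w
        exact ⟨g, hg, hgu.trans (le_add_right le_rfl)⟩
      have hV₁sub : V₁ ⊆ U := by
        rintro u ⟨g, ⟨hgG, _⟩, hgu⟩
        exact upSet_mem hU (hGsub hgG) hgu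
      have hV₁gen : GenInDegs wt V₁ D := by
        refine ⟨{g | g ∈ G ∧ mdeg wt g ∈ D}, ?_, fun g hg => hg.2, fun u =>
          ⟨fun ⟨g, hg, hgu⟩ => ⟨g, hg, hgu⟩, fun ⟨g, hg, hgu⟩ => ⟨g, hg, hgu⟩⟩⟩
        intro g hg
        exact ⟨g, hg, le_rfl⟩
      have hslice : ∀ a' : A, φ a' < N → ∀ u : Fin n →₀ ℕ, mdeg wt u = a' →
          (u ∈ U ↔ u ∈ V₁) := by
        intro a' ha' u hm
        constructor
        · intro hu
          obtain ⟨g, hgG, hgle⟩ := (hGiff u).mp hu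
          have hgD : mdeg wt g ∈ D := by
            have hgd := hGdeg g hgG
            rw [hD'] at hgd
            rcases hgd with hgd | hgd
            · exact hgd
            · exfalso
              obtain ⟨_, hgd1, _⟩ := hgd
              have := d_mono wt hpos φ hφ hgle
              rw [hm] at this
              omega
          exact ⟨g, ⟨hgG, hgD⟩, hgle⟩
        · exact fun hv => hV₁sub hv
      have hV₁agree : ∀ a' ∈ D, HF wt V₁ a' = h a' := by
        intro a' ha'
        rw [← HF_congr_slice wt (hslice a' (hDN a' ha'))]
        rw [hUagree a' (hDD' ha'), hhbar, if_pos (hDN a' ha')]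
      have hV₁HF := hDh V₁ hV₁up hV₁gen hV₁agree
      rw [HF_congr_slice wt (hslice a ha)]
      exact hV₁HF a
    · rw [if_neg ha]
      push_neg at ha
      rw [HF_eq_zero_iff wt hpos]
      intro u hm
      exact hUNsubU u ((hUNmem u).mpr (by rw [hm]; exact ha))
  · -- condition (s)
    intro U hU hHF
    classical
    have hUlow : ∀ a : A, φ a < N → HF wt U a = h a := by
      intro a ha
      rw [hHF a, hhbar a, if_pos ha]
    have hUNsubU : ∀ u : Fin n →₀ ℕ, u ∈ UN → u ∈ U := by
      intro u hu
      have h0 : HF wt U (mdeg wt u) = 0 := by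
        rw [hHF, hhbar, if_neg (not_lt.mpr ((hUNmem u).mp hu))]
      exact (HF_eq_zero_iff wt hpos).mp h0 u rfl
    obtain ⟨hVHF, hVgen⟩ :=
      lowV_HF K wt φ h D N hpos ⟨hDfin, hDg, hDh, hDs⟩ hDN hU hUlow
    have hVup : UpSet (lowV wt φ N U) := lowV_upset wt φ N
    have hMGV := minGens_lowV wt φ N hpos hφ hU
    set W := Submodule.span (MvPolynomial (Fin n) K) (koszulSyz K wt (minGens U) D')
      with hWdef
    have hhighUN : ∀ g : Fin n →₀ ℕ, g ∈ minGens U → N ≤ φ (mdeg wt g) →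
        g ∈ minGens UN :=
      fun g hg hgN => ⟨(hUNmem g).mpr hgN, fun v hv hvle => hg.2 v (hUNsubU v hv) hvle⟩
    have hchoice : ∀ p : Fin n →₀ ℕ, p ∈ minGens UN → ∃ g, g ∈ minGens U ∧ g ≤ p :=
      fun p hp => exists_minGens_le (hUNsubU p (minGens_subset hp))
    obtain ⟨selP, hselP_le, hselP_id, hselP_low⟩ :
        ∃ sel : ↑(minGens UN) → ↑(minGens U),
          (∀ p : ↑(minGens UN), ((sel p : Fin n →₀ ℕ)) ≤ (p : Fin n →₀ ℕ)) ∧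
          (∀ (p : ↑(minGens UN)) (hp : (p : Fin n →₀ ℕ) ∈ minGens U),
            sel p = ⟨(p : Fin n →₀ ℕ), hp⟩) ∧
          (∀ p : ↑(minGens UN), (p : Fin n →₀ ℕ) ∉ minGens U →
            φ (mdeg wt ((sel p : Fin n →₀ ℕ))) < N) := by
      refine ⟨fun p => if hp : (p : Fin n →₀ ℕ) ∈ minGens U then ⟨(p : Fin n →₀ ℕ), hp⟩
        else ⟨(hchoice (p : Fin n →₀ ℕ) p.2).choose,
          (hchoice (p : Fin n →₀ ℕ) p.2).choose_spec.1⟩, ?_, ?_, ?_⟩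
      · intro p
        by_cases hp : (p : Fin n →₀ ℕ) ∈ minGens U
        · simp [dif_pos hp]
        · simp only [dif_neg hp]
          exact (hchoice (p : Fin n →₀ ℕ) p.2).choose_spec.2
      · intro p hp
        simp only [dif_pos hp]
      · intro p hp
        simp only [dif_neg hp]
        by_contra hc
        push_neg at hc
        have hg := (hchoice (p : Fin n →₀ ℕ) p.2).choose_spec
        have heq : (hchoice (p : Fin n →₀ ℕ) p.2).choose = (p : Fin n →₀ ℕ) :=
          p.2.2 _ ((hUNmem _).mpr hc) hg.2
        exact hp (heq ▸ hg.1)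
    -- basic shifting lemma
    have hWshift : ∀ (M L' : Fin n →₀ ℕ) (g g' : ↑(minGens U)),
        ((g : Fin n →₀ ℕ) ⊔ (g' : Fin n →₀ ℕ)) ≤ L' → L' ≤ M →
        (monomial (L' - ((g : Fin n →₀ ℕ) ⊔ (g' : Fin n →₀ ℕ))) (1:K)) •
          kz K (minGens U) g g' ∈ W →
        Finsupp.single g (monomial (M - (g : Fin n →₀ ℕ)) (1:K)) -
          Finsupp.single g' (monomial (M - (g' : Fin n →₀ ℕ)) 1) ∈ W := by
      intro M L' g g' h1 h2 hmem
      have hLM : ((g : Fin n →₀ ℕ) ⊔ (g' : Fin n →₀ ℕ)) ≤ M := le_trans h1 h2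
      have hsm : ∀ (a b : Fin n →₀ ℕ) (x : ↑(minGens U) →₀ MvPolynomial (Fin n) K),
          (monomial a (1:K)) • ((monomial b (1:K)) • x) =
            (monomial (a + b) (1:K)) • x := by
        intro a b x
        rw [smul_smul, monomial_mul, one_mul]
      have heq : Finsupp.single g (monomial (M - (g : Fin n →₀ ℕ)) (1:K)) -
          Finsupp.single g' (monomial (M - (g' : Fin n →₀ ℕ)) 1) =
          (monomial (M - L') (1:K)) •
            ((monomial (L' - ((g : Fin n →₀ ℕ) ⊔ (g' : Fin n →₀ ℕ))) (1:K)) •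
              kz K (minGens U) g g') := by
        rw [hsm, fsub_lemma h1 h2, kz, smul_sub,
          Finsupp.smul_single, Finsupp.smul_single, smul_eq_mul, smul_eq_mul,
          monomial_mul, monomial_mul,
          fsub_lemma (le_sup_left : (g : Fin n →₀ ℕ) ≤ _) hLM,
          fsub_lemma (le_sup_right : (g' : Fin n →₀ ℕ) ≤ _) hLM, one_mul]
      rw [heq]
      exact W.smul_mem _ hmem
    have hrel0 : ∀ (M : Fin n →₀ ℕ) (g g' : ↑(minGens U)),
        (g : Fin n →₀ ℕ) ≤ M → (g' : Fin n →₀ ℕ) ≤ M →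
        kz K (minGens U) g g' ∈ W →
        Finsupp.single g (monomial (M - (g : Fin n →₀ ℕ)) (1:K)) -
          Finsupp.single g' (monomial (M - (g' : Fin n →₀ ℕ)) 1) ∈ W := by
      intro M g g' h1 h2 hk
      refine hWshift M ((g : Fin n →₀ ℕ) ⊔ (g' : Fin n →₀ ℕ)) g g' le_rfl (sup_le h1 h2) ?_
      rw [tsub_self, monomial_zero', C_1, one_smul]
      exact hk
    -- low-low Koszul syzygies
    have hkzlow : ∀ g g' : ↑(minGens U), φ (mdeg wt (g : Fin n →₀ ℕ)) < N →
        φ (mdeg wt (g' : Fin n →₀ ℕ)) < N → kz K (minGens U) g g' ∈ W := by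
      intro g g' hg hg'
      have hgV : (g : Fin n →₀ ℕ) ∈ minGens (lowV wt φ N U) := by
        rw [hMGV]; exact ⟨g.2, hg⟩
      have hg'V : (g' : Fin n →₀ ℕ) ∈ minGens (lowV wt φ N U) := by
        rw [hMGV]; exact ⟨g'.2, hg'⟩
      have hsel1mem : ∀ v : ↑(minGens (lowV wt φ N U)), (v : Fin n →₀ ℕ) ∈ minGens U := by
        intro v
        exact ((Set.ext_iff.mp hMGV _).mp v.2).1
      set sel1 : ↑(minGens (lowV wt φ N U)) → ↑(minGens U) :=
        fun v => ⟨(v : Fin n →₀ ℕ), hsel1mem v⟩ with hsel1def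
      have hsel1le : ∀ v, ((sel1 v : Fin n →₀ ℕ)) ≤ (v : Fin n →₀ ℕ) := fun v => le_rfl
      have hker := kz_mem_ker K (minGens (lowV wt φ N U)) ⟨_, hgV⟩ ⟨_, hg'V⟩
      rw [hDs (lowV wt φ N U) hVup hVHF] at hker
      have hmem := Tmap_span K wt sel1 hsel1le D W ?_ hker
      · rw [Tmap_kz] at hmem
        have e1 : sel1 ⟨_, hgV⟩ = g := Subtype.ext rfl
        have e2 : sel1 ⟨_, hg'V⟩ = g' := Subtype.ext rfl
        rw [e1, e2] at hmem
        rwa [tsub_self, monomial_zero', C_1, one_smul] at hmem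
      · intro a b hd
        rw [tsub_self, monomial_zero', C_1, one_smul]
        exact Submodule.subset_span ⟨sel1 a, sel1 b, hDD' hd, rfl⟩
    -- transferred syzygies of UN
    have hkzPP : ∀ p q : ↑(minGens UN),
        (monomial (((p : Fin n →₀ ℕ) ⊔ (q : Fin n →₀ ℕ)) -
          ((selP p : Fin n →₀ ℕ) ⊔ (selP q : Fin n →₀ ℕ))) (1:K)) •
          kz K (minGens U) (selP p) (selP q) ∈ W := by
      intro p q
      have hker := kz_mem_ker K (minGens UN) p q
      rw [hB2] at hker
      have hmem := Tmap_span K wt selP hselP_le {a : A | φ a ≤ B} W ?_ hker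
      · rwa [Tmap_kz] at hmem
      · intro a b hd
        by_cases hlow : φ (mdeg wt ((selP a : Fin n →₀ ℕ) ⊔ (selP b : Fin n →₀ ℕ))) < N
        · have h1 : φ (mdeg wt ((selP a : Fin n →₀ ℕ))) < N :=
            lt_of_le_of_lt (d_mono wt hpos φ hφ le_sup_left) hlow
          have h2 : φ (mdeg wt ((selP b : Fin n →₀ ℕ))) < N :=
            lt_of_le_of_lt (d_mono wt hpos φ hφ le_sup_right) hlow
          exact W.smul_mem _ (hkzlow (selP a) (selP b) h1 h2)
        · push_neg at hlow
          have hle : φ (mdeg wt ((selP a : Fin n →₀ ℕ) ⊔ (selP b : Fin n →₀ ℕ))) ≤ B :=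
            le_trans (d_mono wt hpos φ hφ (sup_le_sup (hselP_le a) (hselP_le b))) hd
          exact W.smul_mem _
            (Submodule.subset_span ⟨selP a, selP b, hXD' _ hlow hle, rfl⟩)
    -- high-high Koszul syzygies
    have hkzhigh : ∀ g g' : ↑(minGens U), N ≤ φ (mdeg wt (g : Fin n →₀ ℕ)) →
        N ≤ φ (mdeg wt (g' : Fin n →₀ ℕ)) → kz K (minGens U) g g' ∈ W := by
      intro g g' hg hg'
      have hp : (g : Fin n →₀ ℕ) ∈ minGens UN := hhighUN _ g.2 hg
      have hq : (g' : Fin n →₀ ℕ) ∈ minGens UN := hhighUN _ g'.2 hg'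
      have hmem := hkzPP ⟨_, hp⟩ ⟨_, hq⟩
      have e1 : selP ⟨_, hp⟩ = g := by
        rw [hselP_id ⟨_, hp⟩ g.2]
      have e2 : selP ⟨_, hq⟩ = g' := by
        rw [hselP_id ⟨_, hq⟩ g'.2]
      rw [e1, e2] at hmem
      rwa [tsub_self, monomial_zero', C_1, one_smul] at hmem
    -- mixed pairs
    have hmix : ∀ (M : Fin n →₀ ℕ) (u p : ↑(minGens U)),
        φ (mdeg wt (u : Fin n →₀ ℕ)) < N → N ≤ φ (mdeg wt (p : Fin n →₀ ℕ)) →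
        (u : Fin n →₀ ℕ) ≤ M → (p : Fin n →₀ ℕ) ≤ M →
        Finsupp.single u (monomial (M - (u : Fin n →₀ ℕ)) (1:K)) -
          Finsupp.single p (monomial (M - (p : Fin n →₀ ℕ)) 1) ∈ W := by
      intro M u p hu hp huM hpM
      have hpUN : (p : Fin n →₀ ℕ) ∈ minGens UN := hhighUN _ p.2 hp
      set c0 := (u : Fin n →₀ ℕ) ⊔ (p : Fin n →₀ ℕ) with hc0def
      have hc0M : c0 ≤ M := sup_le huM hpM
      by_cases hcaseA : ∃ q, (q ∈ minGens UN ∧ q ≤ c0) ∧ q ∉ minGens U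
      · obtain ⟨q, ⟨hqUN, hqle⟩, hqnot⟩ := hcaseA
        have hgqlow : φ (mdeg wt ((selP ⟨q, hqUN⟩ : Fin n →₀ ℕ))) < N :=
          hselP_low ⟨q, hqUN⟩ hqnot
        have hgqM : ((selP ⟨q, hqUN⟩ : Fin n →₀ ℕ)) ≤ M :=
          le_trans (le_trans (hselP_le ⟨q, hqUN⟩) hqle) hc0M
        have h1 : Finsupp.single u (monomial (M - (u : Fin n →₀ ℕ)) (1:K)) -
            Finsupp.single (selP ⟨q, hqUN⟩)
              (monomial (M - ((selP ⟨q, hqUN⟩ : Fin n →₀ ℕ))) 1) ∈ W :=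
          hrel0 M u (selP ⟨q, hqUN⟩) huM hgqM (hkzlow u (selP ⟨q, hqUN⟩) hu hgqlow)
        have h2 : Finsupp.single (selP ⟨q, hqUN⟩)
            (monomial (M - ((selP ⟨q, hqUN⟩ : Fin n →₀ ℕ))) (1:K)) -
            Finsupp.single p (monomial (M - (p : Fin n →₀ ℕ)) 1) ∈ W := by
          have h3 := hkzPP ⟨q, hqUN⟩ ⟨(p : Fin n →₀ ℕ), hpUN⟩
          have e2 : selP ⟨(p : Fin n →₀ ℕ), hpUN⟩ = p := by
            rw [hselP_id ⟨_, hpUN⟩ p.2]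
          rw [e2] at h3
          exact hWshift M (q ⊔ (p : Fin n →₀ ℕ)) (selP ⟨q, hqUN⟩) p
            (sup_le_sup (hselP_le ⟨q, hqUN⟩) le_rfl)
            (sup_le (le_trans hqle hc0M) hpM) h3
        have hsum := W.add_mem h1 h2
        rwa [sub_add_sub_cancel] at hsum
      · push_neg at hcaseA
        have hPdfin : {q : Fin n →₀ ℕ | q ∈ minGens UN ∧ q ≤ c0}.Finite :=
          (Set.finite_Iic c0).subset (fun q hq => hq.2)
        have hPdne : {q : Fin n →₀ ℕ | q ∈ minGens UN ∧ q ≤ c0}.Nonempty :=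
          ⟨(p : Fin n →₀ ℕ), hpUN, le_sup_right⟩
        obtain ⟨qs, hqsPd, hqsmin⟩ := Set.exists_min_image _
          (fun q => φ (mdeg wt ((u : Fin n →₀ ℕ) ⊔ q))) hPdfin hPdne
        have hqsUN : qs ∈ minGens UN := hqsPd.1
        have hqsN : N ≤ φ (mdeg wt qs) := (hUNmem qs).mp (minGens_subset hqsUN)
        have hqsU : qs ∈ minGens U := hcaseA qs ⟨hqsUN, hqsPd.2⟩
        have hqsB : φ (mdeg wt ((u : Fin n →₀ ℕ) ⊔ qs)) ≤ B := by
          by_contra hgt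
          push_neg at hgt
          have hunle : ¬ (qs ≤ (u : Fin n →₀ ℕ)) := by
            intro hle
            have h5 := d_mono wt hpos φ hφ hle
            omega
          obtain ⟨j, hj⟩ : ∃ j, (u : Fin n →₀ ℕ) j < qs j := by
            by_contra hall
            push_neg at hall
            exact hunle (fun j => hall j)
          have hsingle_le : Finsupp.single j 1 ≤ (u : Fin n →₀ ℕ) ⊔ qs := by
            intro i
            rw [Finsupp.single_apply, Finsupp.sup_apply]
            split
            · next hij => subst hij; omega
            · omega
          have hadd : ((u : Fin n →₀ ℕ) ⊔ qs - Finsupp.single j 1) + Finsupp.single j 1 =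
              (u : Fin n →₀ ℕ) ⊔ qs := tsub_add_cancel_of_le hsingle_le
          have h8 : φ (mdeg wt ((u : Fin n →₀ ℕ) ⊔ qs - Finsupp.single j 1)) +
              φ (mdeg wt (Finsupp.single j 1)) = φ (mdeg wt ((u : Fin n →₀ ℕ) ⊔ qs)) := by
            rw [← map_add, ← mdeg_add, hadd]
          have h9 : φ (mdeg wt (Finsupp.single j 1)) = φ (wt j) := by
            rw [phi_mdeg_single]; simp
          have hwj : 1 ≤ φ (wt j) := wt_ge_one wt φ hpos hφ j
          have hc'low : φ (mdeg wt ((u : Fin n →₀ ℕ) ⊔ qs - Finsupp.single j 1)) < N := by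
            by_contra hc'
            push_neg at hc'
            obtain ⟨w, hw, hwle⟩ := exists_minGens_le ((hUNmem _).mpr hc')
            have hwPd : w ∈ {q : Fin n →₀ ℕ | q ∈ minGens UN ∧ q ≤ c0} :=
              ⟨hw, le_trans hwle (le_trans tsub_le_self (sup_le le_sup_left hqsPd.2))⟩
            have hmin := hqsmin w hwPd
            have huc' : (u : Fin n →₀ ℕ) ≤ (u : Fin n →₀ ℕ) ⊔ qs - Finsupp.single j 1 := by
              intro i
              rw [Finsupp.tsub_apply, Finsupp.single_apply, Finsupp.sup_apply]
              rcases eq_or_ne j i with hij | hij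
              · subst hij; rw [if_pos rfl]; omega
              · rw [if_neg hij]; omega
            have huw : (u : Fin n →₀ ℕ) ⊔ w ≤ (u : Fin n →₀ ℕ) ⊔ qs - Finsupp.single j 1 :=
              sup_le huc' hwle
            have h7 := d_mono wt hpos φ hφ huw
            omega
          have hstep : φ (mdeg wt ((u : Fin n →₀ ℕ) ⊔ qs)) < N + φ (wt j) := by omega
          obtain ⟨i, hij⟩ : ∃ i : Fin n, i ≠ j := by
            by_contra hall
            push_neg at hall
            have huq : (u : Fin n →₀ ℕ) ≤ qs := by
              intro i
              rw [hall i]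
              omega
            have heq2 : (u : Fin n →₀ ℕ) = qs := hqsU.2 (u : Fin n →₀ ℕ) u.2.1 huq
            rw [← heq2] at hqsN
            omega
          have hBb := B_bound K wt φ hpos hφ N hN B UN hUNmem hB2 j i hij
          omega
        have hqsD' : mdeg wt ((u : Fin n →₀ ℕ) ⊔ qs) ∈ D' :=
          hXD' _ (le_trans hqsN (d_mono wt hpos φ hφ le_sup_right)) hqsB
        have hqsM : qs ≤ M := le_trans hqsPd.2 hc0M
        have h1 : Finsupp.single u (monomial (M - (u : Fin n →₀ ℕ)) (1:K)) -
            Finsupp.single (⟨qs, hqsU⟩ : ↑(minGens U))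
              (monomial (M - qs) 1) ∈ W :=
          hrel0 M u ⟨qs, hqsU⟩ huM hqsM
            (Submodule.subset_span ⟨u, ⟨qs, hqsU⟩, hqsD', rfl⟩)
        have h2 : Finsupp.single (⟨qs, hqsU⟩ : ↑(minGens U))
            (monomial (M - qs) (1:K)) -
            Finsupp.single p (monomial (M - (p : Fin n →₀ ℕ)) 1) ∈ W :=
          hrel0 M ⟨qs, hqsU⟩ p hqsM hpM (hkzhigh ⟨qs, hqsU⟩ p hqsN hp)
        have hsum := W.add_mem h1 h2
        rwa [sub_add_sub_cancel] at hsum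
    -- conclude
    refine le_antisymm ?_ ?_
    · intro s hs
      refine ker_le_of_rel K (minGens U) W ?_ hs
      intro M g g' hgM hg'M
      by_cases h1 : φ (mdeg wt (g : Fin n →₀ ℕ)) < N <;>
        by_cases h2 : φ (mdeg wt (g' : Fin n →₀ ℕ)) < N
      · exact hrel0 M g g' hgM hg'M (hkzlow g g' h1 h2)
      · push_neg at h2
        exact hmix M g g' h1 h2 hgM hg'M
      · push_neg at h1
        have hmem := hmix M g' g h2 h1 hg'M hgM
        have hneg := W.neg_mem hmem
        rwa [neg_sub] at hneg
      · push_neg at h1 h2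
        exact hrel0 M g g' hgM hg'M (hkzhigh g g' h1 h2)
    · rw [Submodule.span_le]
      rintro s ⟨gu, gv, hd, rfl⟩
      exact kz_mem_ker K (minGens U) gu gv
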